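/- Fix an integer e>1 and a charge (s_0,s_1)∈ℕ² with s_0 ≤ s_1. If λ ∈ Φ_{e,n}^{(s_0,s_1)} and f is an integer with f > max(s_0+n, s_1+n), then λ ∈ Φ_{f,n}^{(s_0,s_1)} (Uglov bipartitions defined with residues taken modulo f instead of e). -/

import Mathlib

open Finset

/-- A node `(a, b, c)`: row index `a ≥ 1`, column index `b ≥ 1`, component `c ∈ {0,1}`. -/
abbrev Node : Type := ℕ × ℕ × Fin 2

namespace UglovPaper

/-- Row index of a node. -/
def nrow (γ : Node) : ℕ := γ.1

/-- Column index of a node. -/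
def ncol (γ : Node) : ℕ := γ.2.1

/-- Component of a node. -/
def ncomp (γ : Node) : Fin 2 := γ.2.2

/-- A finite set of nodes is the Young diagram of a bipartition iff all indices are `≥ 1`
and the set is closed under moving left in a row and up in a column (in each component). -/
def IsDiagram (D : Finset Node) : Prop :=
  (∀ γ ∈ D, 1 ≤ nrow γ ∧ 1 ≤ ncol γ) ∧
  (∀ γ ∈ D, ∀ b' : ℕ, 1 ≤ b' → b' ≤ ncol γ → (nrow γ, b', ncomp γ) ∈ D) ∧
  (∀ γ ∈ D, 2 ≤ nrow γ → (nrow γ - 1, ncol γ, ncomp γ) ∈ D)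

/-- `part D c a` is the `a`-th part `λ^(c)_a` of the bipartition with diagram `D`. -/
def part (D : Finset Node) (c : Fin 2) (a : ℕ) : ℕ :=
  (D.filter (fun γ => nrow γ = a ∧ ncomp γ = c)).card

/-- The content `b - a + s_c` of a node `(a,b,c)` for the charge `s`. -/
def cont (s : Fin 2 → ℤ) (γ : Node) : ℤ := (ncol γ : ℤ) - (nrow γ : ℤ) + s (ncomp γ)

/-- The residue mod `e` of a node for the charge `s`. -/
def res (e : ℕ) (s : Fin 2 → ℤ) (γ : Node) : ZMod e := ((cont s γ : ℤ) : ZMod e)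

/-- The order `γ <_{(s₀,s₁)} γ'` on nodes. -/
def chargeLT (s : Fin 2 → ℤ) (γ γ' : Node) : Prop :=
  cont s γ < cont s γ' ∨ (cont s γ = cont s γ' ∧ ncomp γ' < ncomp γ)

/-- The positive asymptotic order `γ <_{(v₀,v₁)₊} γ'`. -/
def posLT (γ γ' : Node) : Prop :=
  ncomp γ' < ncomp γ ∨ (ncomp γ = ncomp γ' ∧ nrow γ' < nrow γ)

/-- The negative asymptotic order `γ <_{(v₀,v₁)₋} γ'`. -/
def negLT (γ γ' : Node) : Prop :=
  ncomp γ < ncomp γ' ∨ (ncomp γ = ncomp γ' ∧ nrow γ' < nrow γ)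

/-- `γ` is a removable node of the diagram `D`. -/
def Removable (D : Finset Node) (γ : Node) : Prop := γ ∈ D ∧ IsDiagram (D.erase γ)

/-- `γ` is an addable node of the diagram `D`. -/
def Addable (D : Finset Node) (γ : Node) : Prop := γ ∉ D ∧ IsDiagram (insert γ D)

/-- `γ` is a normal `i`-node of `D` with respect to the order `lt` and the residue map `r`:
it is a removable `i`-node, and for every `i`-node `η` above it, the number of addable
`i`-nodes in the interval `(γ, η]` does not exceed the number of removable `i`-nodes there.
This is equivalent to surviving the `RA`-deletion process. -/
def NormalNode {α : Type*} (D : Finset Node) (lt : Node → Node → Prop)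
    (r : Node → α) (i : α) (γ : Node) : Prop :=
  Removable D γ ∧ r γ = i ∧
  ∀ η : Node, r η = i → lt γ η →
    {x : Node | Addable D x ∧ r x = i ∧ lt γ x ∧ (lt x η ∨ x = η)}.ncard ≤
    {x : Node | Removable D x ∧ r x = i ∧ lt γ x ∧ (lt x η ∨ x = η)}.ncard

/-- `γ` is the good `i`-node of `D`: the minimal normal `i`-node for the order `lt`. -/
def GoodNode {α : Type*} (D : Finset Node) (lt : Node → Node → Prop)
    (r : Node → α) (i : α) (γ : Node) : Prop :=
  NormalNode D lt r i γ ∧ ∀ δ : Node, NormalNode D lt r i δ → δ = γ ∨ lt γ δ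

/-- The recursively defined class of bipartitions labelling the crystal:
the empty bipartition has rank `0`, and a bipartition of rank `n + 1` belongs iff
removing some good `i`-node yields a member of rank `n`. -/
inductive CrystalSet {α : Type*} (lt : Node → Node → Prop) (r : Node → α) :
    ℕ → Finset Node → Prop
  | empty : CrystalSet lt r 0 ∅
  | step {n : ℕ} {D : Finset Node} {γ : Node} (i : α) :
      IsDiagram D → GoodNode D lt r i γ →
      CrystalSet lt r n (D.erase γ) → CrystalSet lt r (n + 1) D

/-- The set `Φ_{e,n}^{(s₀,s₁)}` of Uglov bipartitions. -/
def UglovSet (e : ℕ) (s : Fin 2 → ℤ) : ℕ → Finset Node → Prop :=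
  CrystalSet (chargeLT s) (res e s)

/-- The set `Φ_{e,n}^{(v₀,v₁)₊}` of positive Kleshchev bipartitions. -/
def KleshchevPos (e : ℕ) (v : Fin 2 → ℤ) : ℕ → Finset Node → Prop :=
  CrystalSet posLT (res e v)

/-- The set `Φ_{e,n}^{(v₀,v₁)₋}` of negative Kleshchev bipartitions. -/
def KleshchevNeg (e : ℕ) (v : Fin 2 → ℤ) : ℕ → Finset Node → Prop :=
  CrystalSet negLT (res e v)

/-- Swapping the two components of a bipartition: `(λ⁽⁰⁾,λ⁽¹⁾) ↦ (λ⁽¹⁾,λ⁽⁰⁾)`. -/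
def swapDiagram (D : Finset Node) : Finset Node :=
  D.image (fun γ => (γ.1, γ.2.1, γ.2.2 + 1))

/-! ### Symbols -/

/-- `beta s m D c j` is the `j`-th entry `β^(c)_j = λ^(c)_j − j + s_c + m` of the
`s`-symbol of `D`, for `1 ≤ j ≤ m + s_c`. -/
def beta (s : Fin 2 → ℕ) (m : ℕ) (D : Finset Node) (c : Fin 2) (j : ℕ) : ℕ :=
  part D c j + (m + s c) - j

/-- The multiset of entries of the row `β^(c)` of the `s`-symbol. -/
def rowM (s : Fin 2 → ℕ) (m : ℕ) (D : Finset Node) (c : Fin 2) : Multiset ℕ :=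
  (Finset.Icc 1 (m + s c)).val.map (beta s m D c)

/-- The list of the values `θ(β⁽⁰⁾_{m+s₀}), θ(β⁽⁰⁾_{m+s₀-1}), …` chosen greedily:
at step `k` (handling `p = m + s₀ - k`) we choose the largest entry of the top row not yet
used that is `≤ β⁽⁰⁾_p`. -/
def thetaList (s : Fin 2 → ℕ) (m : ℕ) (D : Finset Node) : ℕ → List ℕ
  | 0 => []
  | k + 1 =>
      let prev := thetaList s m D k
      prev ++ [((((Finset.Icc 1 (m + s 1)).image (beta s m D 1)).filter
          (fun y => y ∉ prev ∧ y ≤ beta s m D 0 (m + s 0 - k))).max.unbotD 0)]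

/-- The greedy injection `θ`, as a function of the index `p ∈ {1, …, m + s₀}`:
`theta s m D p = θ(β⁽⁰⁾_p)`. -/
def theta (s : Fin 2 → ℕ) (m : ℕ) (D : Finset Node) (p : ℕ) : ℕ :=
  (thetaList s m D (m + s 0)).getD (m + s 0 - p) 0

/-- The bottom row of the symbol obtained by exchanging the entries of every pair:
it is the multiset of the values `θ(β⁽⁰⁾_p)`. -/
def bottomRowNew (s : Fin 2 → ℕ) (m : ℕ) (D : Finset Node) : Multiset ℕ :=
  (Finset.Icc 1 (m + s 0)).val.map (theta s m D)

/-- The top row of the symbol obtained by exchanging the entries of every pair: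
all entries of both rows that did not go to the new bottom row. -/
def topRowNew (s : Fin 2 → ℕ) (m : ℕ) (D : Finset Node) : Multiset ℕ :=
  (rowM s m D 0 + rowM s m D 1) - bottomRowNew s m D

/-- The rows of the symbol of `Υ(λ)`. -/
def newRow (s : Fin 2 → ℕ) (m : ℕ) (D : Finset Node) (c : Fin 2) : Multiset ℕ :=
  if c = 0 then bottomRowNew s m D else topRowNew s m D

/-- The `j`-th largest entry of a multiset of naturals (`j ≥ 1`). -/
def rowEntry (B : Multiset ℕ) (j : ℕ) : ℕ :=
  (B.sort (· ≤ ·)).getD (Multiset.card B - j) 0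

/-- The `j`-th part of the partition encoded by a multiset of `card B` distinct
beta-numbers: `λ_j = (j-th largest entry) + j - card B`. -/
def rowPart (B : Multiset ℕ) (j : ℕ) : ℕ :=
  if 1 ≤ j ∧ j ≤ Multiset.card B then rowEntry B j + j - Multiset.card B else 0

/-- The Young diagram of the bipartition with parts `p`, within the box of size `N`. -/
def toDiagram (p : Fin 2 → ℕ → ℕ) (N : ℕ) : Finset Node :=
  ((Finset.Icc 1 N) ×ˢ (Finset.Icc 1 N) ×ˢ (Finset.univ : Finset (Fin 2))).filter
    (fun γ => γ.2.1 ≤ p γ.2.2 γ.1)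

/-- The map `Υ_{(s₀,s₁)}`: exchange the two entries of every pair of the `s`-symbol and
reorder the rows; `Upsilon s m D` is the diagram of the resulting bipartition. -/
def Upsilon (s : Fin 2 → ℕ) (m : ℕ) (D : Finset Node) : Finset Node :=
  toDiagram (fun c j => rowPart (newRow s m D c) j) D.card

/-- The list of values `τ(α⁽⁰⁾_1), τ(α⁽⁰⁾_2), …` chosen greedily: at step `k + 1`
(handling `p = k + 1`) we choose the smallest entry of the top row `Top` not yet used
that is `≥ b (k+1)`, where `b p` is the `p`-th entry of the bottom row. -/
def tauList (Top : Finset ℕ) (b : ℕ → ℕ) : ℕ → List ℕ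
  | 0 => []
  | k + 1 =>
      let prev := tauList Top b k
      prev ++ [((Top.filter (fun y => y ∉ prev ∧ b (k + 1) ≤ y)).min.untopD 0)]

/-- The greedy injection `τ`, as a function of the index `p ∈ {1, …, P}`. -/
def tau (Top : Finset ℕ) (b : ℕ → ℕ) (P : ℕ) (p : ℕ) : ℕ :=
  (tauList Top b P).getD (p - 1) 0

end UglovPaper
namespace UglovPaper

section Basics

variable {D : Finset Node}

lemma ncomp_lt_one {c : Fin 2} (h : c < 1) : c = 0 := by omega

lemma fin2_cases (c : Fin 2) : c = 0 ∨ c = 1 := by omega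

/-- The column set of row `a`, component `c`. -/
lemma part_filter_eq (a : ℕ) (c : Fin 2) (hD : IsDiagram D) :
    D.filter (fun γ => nrow γ = a ∧ ncomp γ = c) =
      (Finset.Icc 1 (part D c a)).image (fun b => ((a, b, c) : Node)) := by
  classical
  set F := D.filter (fun γ => nrow γ = a ∧ ncomp γ = c) with hF
  set C := F.image ncol with hC
  have hmemF : ∀ x : Node, x ∈ F ↔ (x ∈ D ∧ nrow x = a ∧ ncomp x = c) := by
    intro x; simp [hF, Finset.mem_filter]
  have hFC : F = C.image (fun b => ((a, b, c) : Node)) := by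
    ext x
    constructor
    · intro hx
      obtain ⟨hxD, hxa, hxc⟩ := (hmemF x).1 hx
      refine Finset.mem_image.2 ⟨ncol x, Finset.mem_image.2 ⟨x, hx, rfl⟩, ?_⟩
      obtain ⟨x1, x2, x3⟩ := x
      simp only [nrow, ncol, ncomp] at hxa hxc ⊢
      simp [hxa, hxc]
    · intro hx
      obtain ⟨b, hb, rfl⟩ := Finset.mem_image.1 hx
      obtain ⟨y, hy, hyb⟩ := Finset.mem_image.1 hb
      obtain ⟨hyD, hya, hyc⟩ := (hmemF y).1 hy
      have : y = (a, b, c) := by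
        obtain ⟨y1, y2, y3⟩ := y
        simp only [nrow, ncol, ncomp] at hya hyc hyb
        simp [hya, hyc, hyb]
      rw [this] at hy; exact hy
  have hcard : C.card = F.card := by
    rw [hC]
    apply Finset.card_image_of_injOn
    intro x hx y hy hxy
    obtain ⟨hxD, hxa, hxc⟩ := (hmemF x).1 hx
    obtain ⟨hyD, hya, hyc⟩ := (hmemF y).1 hy
    obtain ⟨x1, x2, x3⟩ := x; obtain ⟨y1, y2, y3⟩ := y
    simp only [nrow, ncol, ncomp] at hxa hxc hya hyc hxy
    simp [hxa, hxc, hya, hyc, hxy]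
  have hCdc : C = Finset.Icc 1 C.card := by
    have hsub : C ⊆ Finset.Icc 1 C.card := by
      intro b hb
      obtain ⟨y, hy, hyb⟩ := Finset.mem_image.1 hb
      obtain ⟨hyD, hya, hyc⟩ := (hmemF y).1 hy
      have hb1 : 1 ≤ b := hyb ▸ (hD.1 y hyD).2
      have hdown : Finset.Icc 1 b ⊆ C := by
        intro b' hb'
        simp only [Finset.mem_Icc] at hb'
        have hmem : ((nrow y, b', ncomp y) : Node) ∈ D :=
          hD.2.1 y hyD b' hb'.1 (hyb ▸ hb'.2)
        refine Finset.mem_image.2 ⟨(nrow y, b', ncomp y), ?_, rfl⟩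
        exact (hmemF _).2 ⟨hmem, hya, hyc⟩
      have : (Finset.Icc 1 b).card ≤ C.card := Finset.card_le_card hdown
      simp only [Nat.card_Icc] at this
      exact Finset.mem_Icc.2 ⟨hb1, by omega⟩
    have := Finset.eq_of_subset_of_card_le hsub (by simp)
    exact this
  have hpc : part D c a = C.card := by rw [part, ← hF, ← hcard]
  rw [hFC, hCdc, ← hpc]

lemma mem_iff_le_part (hD : IsDiagram D) (a b : ℕ) (c : Fin 2) :
    ((a, b, c) : Node) ∈ D ↔ 1 ≤ a ∧ 1 ≤ b ∧ b ≤ part D c a := by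
  constructor
  · intro h
    have h1 := hD.1 _ h
    have : ((a,b,c) : Node) ∈ D.filter (fun γ => nrow γ = a ∧ ncomp γ = c) := by
      exact Finset.mem_filter.2 ⟨h, rfl, rfl⟩
    rw [part_filter_eq a c hD] at this
    obtain ⟨b', hb', heq⟩ := Finset.mem_image.1 this
    have : b' = b := by simpa [ncol] using congrArg ncol heq
    subst this
    simp only [Finset.mem_Icc] at hb'
    exact ⟨h1.1, hb'.1, hb'.2⟩
  · rintro ⟨ha, hb, hbp⟩
    have : ((a,b,c) : Node) ∈ (Finset.Icc 1 (part D c a)).image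
        (fun b => ((a, b, c) : Node)) :=
      Finset.mem_image.2 ⟨b, Finset.mem_Icc.2 ⟨hb, hbp⟩, rfl⟩
    rw [← part_filter_eq a c hD] at this
    exact Finset.mem_of_mem_filter _ this

lemma part_row_zero (hD : IsDiagram D) (c : Fin 2) : part D c 0 = 0 := by
  rw [part, Finset.card_eq_zero, Finset.filter_eq_empty_iff]
  rintro γ hγ ⟨h0, -⟩
  have := (hD.1 γ hγ).1
  omega

lemma part_succ_le (hD : IsDiagram D) (c : Fin 2) {a : ℕ} (ha : 1 ≤ a) :
    part D c (a + 1) ≤ part D c a := by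
  by_cases h : part D c (a+1) = 0
  · omega
  · have hmem : ((a+1, part D c (a+1), c) : Node) ∈ D :=
      (mem_iff_le_part hD _ _ _).2 ⟨by omega, by omega, le_refl _⟩
    have := hD.2.2 _ hmem (by simp only [nrow]; omega)
    simp only [nrow, ncol, ncomp, Nat.add_sub_cancel] at this
    exact ((mem_iff_le_part hD _ _ _).1 this).2.2

lemma part_antitone (hD : IsDiagram D) (c : Fin 2) {a a' : ℕ} (ha : 1 ≤ a)
    (h : a ≤ a') : part D c a' ≤ part D c a := by
  induction a', h using Nat.le_induction with
  | base => exact le_refl _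
  | succ m hm ih => exact le_trans (part_succ_le hD c (by omega)) ih

lemma part_le_sz (c : Fin 2) (a : ℕ) :
    part D c a ≤ (D.filter (fun γ => ncomp γ = c)).card := by
  apply Finset.card_le_card
  intro x hx
  simp only [Finset.mem_filter] at hx ⊢
  exact ⟨hx.1, hx.2.2⟩

lemma row_le_sz (hD : IsDiagram D) {c : Fin 2} {a : ℕ} (h : 1 ≤ part D c a) (ha : 1 ≤ a) :
    a ≤ (D.filter (fun γ => ncomp γ = c)).card := by
  have hsub : (Finset.Icc 1 a).image (fun j => ((j, 1, c) : Node)) ⊆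
      D.filter (fun γ => ncomp γ = c) := by
    intro x hx
    obtain ⟨j, hj, rfl⟩ := Finset.mem_image.1 hx
    simp only [Finset.mem_Icc] at hj
    have : ((j, 1, c) : Node) ∈ D := (mem_iff_le_part hD _ _ _).2
      ⟨hj.1, le_refl _, le_trans h (part_antitone hD c hj.1 hj.2)⟩
    exact Finset.mem_filter.2 ⟨this, rfl⟩
  have hcard : ((Finset.Icc 1 a).image (fun j => ((j, 1, c) : Node))).card = a := by
    rw [Finset.card_image_of_injective _ (by intro x y hxy; simpa using hxy)]
    simp
  calc a = _ := hcard.symm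
    _ ≤ _ := Finset.card_le_card hsub

lemma sz_le_card (c : Fin 2) : (D.filter (fun γ => ncomp γ = c)).card ≤ D.card :=
  Finset.card_le_card (Finset.filter_subset _ _)

lemma sz_add_sz : (D.filter (fun γ => ncomp γ = (0 : Fin 2))).card
    + (D.filter (fun γ => ncomp γ = (1 : Fin 2))).card = D.card := by
  have heq : D.filter (fun γ => ¬ ncomp γ = (0 : Fin 2)) =
      D.filter (fun γ => ncomp γ = (1 : Fin 2)) := by
    apply Finset.filter_congr
    intro x _
    constructor
    · intro h; omega
    · intro h; omega
  rw [← heq, Finset.card_filter_add_card_filter_not (p := fun γ => ncomp γ = (0 : Fin 2))]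

lemma part_le_card (c : Fin 2) (a : ℕ) : part D c a ≤ D.card :=
  le_trans (part_le_sz c a) (sz_le_card c)

lemma row_le_card (hD : IsDiagram D) {c : Fin 2} {a : ℕ} (h : 1 ≤ part D c a) (ha : 1 ≤ a) :
    a ≤ D.card := le_trans (row_le_sz hD h ha) (sz_le_card c)

lemma part_top_zero (hD : IsDiagram D) (c : Fin 2) : part D c (D.card + 1) = 0 := by
  by_contra h
  have := row_le_card (c := c) (a := D.card + 1) hD (by omega) (by omega)
  omega

/-- Hook bound: `part c 1 + a ≤ size of component c + 1` when row `a` is nonempty. -/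
lemma hook_bound (hD : IsDiagram D) {c : Fin 2} {a : ℕ} (h : 1 ≤ part D c a) (ha : 1 ≤ a) :
    part D c 1 + a ≤ (D.filter (fun γ => ncomp γ = c)).card + 1 := by
  set T := ((Finset.Icc 1 (part D c 1)).image (fun j => ((1, j, c) : Node))) ∪
    ((Finset.Icc 2 a).image (fun i => ((i, 1, c) : Node))) with hT
  have hsub : T ⊆ D.filter (fun γ => ncomp γ = c) := by
    intro x hx
    rw [hT, Finset.mem_union] at hx
    rcases hx with hx | hx
    · obtain ⟨j, hj, rfl⟩ := Finset.mem_image.1 hx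
      simp only [Finset.mem_Icc] at hj
      have : ((1, j, c) : Node) ∈ D := (mem_iff_le_part hD _ _ _).2 ⟨le_refl _, hj.1, hj.2⟩
      exact Finset.mem_filter.2 ⟨this, rfl⟩
    · obtain ⟨i, hi, rfl⟩ := Finset.mem_image.1 hx
      simp only [Finset.mem_Icc] at hi
      have : ((i, 1, c) : Node) ∈ D := (mem_iff_le_part hD _ _ _).2
        ⟨by omega, le_refl _, le_trans h (part_antitone hD c (by omega) hi.2)⟩
      exact Finset.mem_filter.2 ⟨this, rfl⟩
  have hdisj : Disjoint ((Finset.Icc 1 (part D c 1)).image (fun j => ((1, j, c) : Node)))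
      ((Finset.Icc 2 a).image (fun i => ((i, 1, c) : Node))) := by
    rw [Finset.disjoint_left]
    intro x hx hx'
    obtain ⟨j, hj, rfl⟩ := Finset.mem_image.1 hx
    obtain ⟨i, hi, heq⟩ := Finset.mem_image.1 hx'
    simp only [Finset.mem_Icc] at hi
    have : i = 1 := by simpa [nrow] using congrArg nrow heq
    omega
  have hcard : T.card = part D c 1 + (a - 1) := by
    rw [hT, Finset.card_union_of_disjoint hdisj,
      Finset.card_image_of_injective _ (by intro x y hxy; simpa using hxy),
      Finset.card_image_of_injective _ (by intro x y hxy; simpa using hxy)]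
    simp only [Nat.card_Icc]
    omega
  have hle := Finset.card_le_card hsub
  have h2 : part D c 1 + a ≤ T.card + 1 := by omega
  exact h2.trans (Nat.succ_le_succ hle)

end Basics
section Chars

variable {D : Finset Node}

lemma removable_iff (hD : IsDiagram D) (a b : ℕ) (c : Fin 2) :
    Removable D (a, b, c) ↔
      1 ≤ a ∧ 1 ≤ b ∧ b = part D c a ∧ part D c (a + 1) < b := by
  constructor
  · rintro ⟨hmem, hdgr⟩
    obtain ⟨ha, hb, hbp⟩ := (mem_iff_le_part hD a b c).1 hmem
    have hbeq : b = part D c a := by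
      by_contra hne
      have hlt : b < part D c a := by omega
      have hmem' : ((a, b+1, c) : Node) ∈ D :=
        (mem_iff_le_part hD _ _ _).2 ⟨ha, by omega, by omega⟩
      have hmem'' : ((a, b+1, c) : Node) ∈ D.erase (a, b, c) :=
        Finset.mem_erase.2 ⟨by simp, hmem'⟩
      have := hdgr.2.1 _ hmem'' b hb (by simp [ncol])
      simp only [nrow, ncol, ncomp] at this
      exact (Finset.notMem_erase _ _) this
    refine ⟨ha, hb, hbeq, ?_⟩
    by_contra hge
    have hmem' : ((a+1, b, c) : Node) ∈ D :=
      (mem_iff_le_part hD _ _ _).2 ⟨by omega, hb, by omega⟩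
    have hmem'' : ((a+1, b, c) : Node) ∈ D.erase (a, b, c) :=
      Finset.mem_erase.2 ⟨by simp, hmem'⟩
    have := hdgr.2.2 _ hmem'' (by simp only [nrow]; omega)
    simp only [nrow, ncol, ncomp, Nat.add_sub_cancel] at this
    exact (Finset.notMem_erase _ _) this
  · rintro ⟨ha, hb, hbeq, hlt⟩
    have hmem : ((a, b, c) : Node) ∈ D :=
      (mem_iff_le_part hD _ _ _).2 ⟨ha, hb, le_of_eq hbeq⟩
    refine ⟨hmem, ?_, ?_, ?_⟩
    · intro γ hγ
      exact hD.1 γ (Finset.mem_of_mem_erase hγ)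
    · intro γ hγ b' hb' hb'le
      have hγD := Finset.mem_of_mem_erase hγ
      have hmem' : ((nrow γ, b', ncomp γ) : Node) ∈ D := hD.2.1 γ hγD b' hb' hb'le
      refine Finset.mem_erase.2 ⟨?_, hmem'⟩
      intro heq
      have hrow : nrow γ = a := by simpa [nrow] using congrArg nrow heq
      have hcol : b' = b := by simpa [ncol] using congrArg ncol heq
      have hcomp : ncomp γ = c := by simpa [ncomp] using congrArg ncomp heq
      obtain ⟨γ1, γ2, γ3⟩ := γ
      simp only [nrow, ncol, ncomp] at hrow hcomp hb'le
      have hγcol : γ2 ≤ part D c a := by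
        have := ((mem_iff_le_part hD γ1 γ2 γ3).1 hγD).2.2
        rw [hrow, hcomp] at this
        exact this
      have hcoleq : γ2 = b := by omega
      exact (Finset.mem_erase.1 hγ).1 (by rw [hrow, hcomp, hcoleq])
    · intro γ hγ h2
      have hγD := Finset.mem_of_mem_erase hγ
      have hmem' : ((nrow γ - 1, ncol γ, ncomp γ) : Node) ∈ D := hD.2.2 γ hγD h2
      refine Finset.mem_erase.2 ⟨?_, hmem'⟩
      intro heq
      have hrow : nrow γ - 1 = a := by simpa [nrow] using congrArg nrow heq
      have hcol : ncol γ = b := by simpa [ncol] using congrArg ncol heq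
      have hcomp : ncomp γ = c := by simpa [ncomp] using congrArg ncomp heq
      have hrow' : nrow γ = a + 1 := by
        have h3 := hD.1 γ hγD
        omega
      obtain ⟨γ1, γ2, γ3⟩ := γ
      simp only [nrow, ncol, ncomp] at hrow' hcol hcomp
      have : γ2 ≤ part D c (a+1) := by
        have := ((mem_iff_le_part hD γ1 γ2 γ3).1 hγD).2.2
        rw [hrow', hcomp] at this
        exact this
      omega

lemma addable_iff (hD : IsDiagram D) (a b : ℕ) (c : Fin 2) :
    Addable D (a, b, c) ↔
      1 ≤ a ∧ b = part D c a + 1 ∧ (a = 1 ∨ part D c a < part D c (a - 1)) := by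
  constructor
  · rintro ⟨hnot, hdgr⟩
    have hself : ((a, b, c) : Node) ∈ insert ((a, b, c) : Node) D :=
      Finset.mem_insert_self _ _
    obtain ⟨ha, hb⟩ := hdgr.1 _ hself
    simp only [nrow, ncol] at ha hb
    have hgt : part D c a < b := by
      by_contra hle
      exact hnot ((mem_iff_le_part hD _ _ _).2 ⟨ha, hb, by omega⟩)
    have hbeq : b = part D c a + 1 := by
      by_contra hne
      have h2 : part D c a + 1 ≤ b - 1 := by omega
      have := hdgr.2.1 _ hself (b-1) (by omega) (by simp only [ncol]; omega)
      simp only [nrow, ncol, ncomp] at this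
      rcases Finset.mem_insert.1 this with heq | hmem
      · have : b - 1 = b := by simpa [ncol] using congrArg ncol heq
        omega
      · have := ((mem_iff_le_part hD _ _ _).1 hmem).2.2
        omega
    refine ⟨ha, hbeq, ?_⟩
    by_cases ha1 : a = 1
    · exact Or.inl ha1
    · refine Or.inr ?_
      have := hdgr.2.2 _ hself (by simp only [nrow]; omega)
      simp only [nrow, ncol, ncomp] at this
      rcases Finset.mem_insert.1 this with heq | hmem
      · have : a - 1 = a := by simpa [nrow] using congrArg nrow heq
        omega
      · have := ((mem_iff_le_part hD _ _ _).1 hmem).2.2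
        omega
  · rintro ⟨ha, hbeq, hcase⟩
    have hnot : ((a, b, c) : Node) ∉ D := by
      intro hmem
      have := ((mem_iff_le_part hD _ _ _).1 hmem).2.2
      omega
    refine ⟨hnot, ?_, ?_, ?_⟩
    · intro γ hγ
      rcases Finset.mem_insert.1 hγ with rfl | hγD
      · exact ⟨by simpa [nrow] using ha, by simp [ncol]; omega⟩
      · exact hD.1 γ hγD
    · intro γ hγ b' hb' hb'le
      rcases Finset.mem_insert.1 hγ with rfl | hγD
      · simp only [nrow, ncol, ncomp] at hb'le ⊢
        by_cases hbb : b' = b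
        · subst hbb; exact Finset.mem_insert_self _ _
        · refine Finset.mem_insert_of_mem ((mem_iff_le_part hD _ _ _).2 ⟨ha, hb', by omega⟩)
      · exact Finset.mem_insert_of_mem (hD.2.1 γ hγD b' hb' hb'le)
    · intro γ hγ h2
      rcases Finset.mem_insert.1 hγ with rfl | hγD
      · simp only [nrow, ncol, ncomp] at h2 ⊢
        rcases hcase with h1 | hlt
        · omega
        · refine Finset.mem_insert_of_mem ((mem_iff_le_part hD _ _ _).2
            ⟨by omega, by omega, ?_⟩)
          omega
      · exact Finset.mem_insert_of_mem (hD.2.2 γ hγD h2)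

lemma removable_mem {γ : Node} (h : Removable D γ) : γ ∈ D := h.1

lemma addable_not_mem {γ : Node} (h : Addable D γ) : γ ∉ D := h.1

lemma not_addable_removable {γ : Node} (h : Addable D γ) (h' : Removable D γ) : False :=
  h.1 h'.1

end Chars

section PartErase

variable {D : Finset Node}

lemma part_mono_subset {D' : Finset Node} (h : D' ⊆ D) (c : Fin 2) (a : ℕ) :
    part D' c a ≤ part D c a :=
  Finset.card_le_card (Finset.filter_subset_filter _ h)

lemma part_erase_eq {γ : Node} (hγ : γ ∈ D) (a : ℕ) (c : Fin 2)
    (hrow : nrow γ = a) (hcomp : ncomp γ = c) :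
    part (D.erase γ) c a = part D c a - 1 := by
  rw [part, part, Finset.filter_erase, Finset.card_erase_of_mem]
  simp [Finset.mem_filter, hγ, hrow, hcomp]

lemma part_erase_ne {γ : Node} (a : ℕ) (c : Fin 2)
    (h : nrow γ ≠ a ∨ ncomp γ ≠ c) :
    part (D.erase γ) c a = part D c a := by
  rw [part, part, Finset.filter_erase, Finset.card_erase_eq_ite]
  have : γ ∉ D.filter (fun x => nrow x = a ∧ ncomp x = c) := by
    simp only [Finset.mem_filter]
    rintro ⟨-, h1, h2⟩
    tauto
  simp [this]

end PartErase
section Cont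

variable {D : Finset Node} {s₀ s₁ n f : ℕ}

lemma cont_mk (s : Fin 2 → ℤ) (a b : ℕ) (c : Fin 2) :
    cont s ((a, b, c) : Node) = (b : ℤ) - a + s c := rfl

lemma sv_zero : (![(s₀ : ℤ), (s₁ : ℤ)] : Fin 2 → ℤ) 0 = s₀ := rfl

lemma sv_one : (![(s₀ : ℤ), (s₁ : ℤ)] : Fin 2 → ℤ) 1 = s₁ := rfl

lemma sv_nonneg (c : Fin 2) : 0 ≤ (![(s₀ : ℤ), (s₁ : ℤ)] : Fin 2 → ℤ) c := by
  rcases fin2_cases c with rfl | rfl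
  · rw [sv_zero]; positivity
  · rw [sv_one]; positivity

lemma sv_le (hs : s₀ ≤ s₁) (c : Fin 2) :
    (![(s₀ : ℤ), (s₁ : ℤ)] : Fin 2 → ℤ) c ≤ s₁ := by
  rcases fin2_cases c with rfl | rfl
  · rw [sv_zero]; exact_mod_cast hs
  · rw [sv_one]

lemma sv_ge (hs : s₀ ≤ s₁) (c : Fin 2) :
    (s₀ : ℤ) ≤ (![(s₀ : ℤ), (s₁ : ℤ)] : Fin 2 → ℤ) c := by
  rcases fin2_cases c with rfl | rfl
  · rw [sv_zero]
  · rw [sv_one]; exact_mod_cast hs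

lemma cont_upper (hD : IsDiagram D) {a b : ℕ} {c : Fin 2}
    (hx : Addable D (a, b, c) ∨ Removable D (a, b, c)) :
    (b : ℤ) - a ≤ part D c 1 := by
  rcases hx with hx | hx
  · obtain ⟨ha, hbeq, -⟩ := (addable_iff hD a b c).1 hx
    have h1 : part D c a ≤ part D c 1 := part_antitone hD c (le_refl 1) ha
    omega
  · obtain ⟨ha, hb, hbeq, -⟩ := (removable_iff hD a b c).1 hx
    have h1 : part D c a ≤ part D c 1 := part_antitone hD c (le_refl 1) ha
    omega

/-- Gap bound: content of an addable-or-removable node minus content of a removable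
node is less than `f`. -/
lemma gap_lt₁ (hD : IsDiagram D) (hs : s₀ ≤ s₁) (hn : D.card ≤ n)
    (hfn : (s₁ : ℤ) + n < f) {a b α β : ℕ} {c c' : Fin 2}
    (hx : Addable D (a, b, c) ∨ Removable D (a, b, c))
    (hy : Removable D (α, β, c')) :
    cont ![(s₀ : ℤ), (s₁ : ℤ)] (a, b, c) - cont ![(s₀ : ℤ), (s₁ : ℤ)] (α, β, c') < f := by
  set Sv : Fin 2 → ℤ := ![(s₀ : ℤ), (s₁ : ℤ)] with hSv
  rw [cont_mk, cont_mk]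
  have hub : (b : ℤ) - a ≤ part D c 1 := cont_upper hD hx
  obtain ⟨hα, hβ1, hβeq, -⟩ := (removable_iff hD α β c').1 hy
  have hpα : 1 ≤ part D c' α := by omega
  have hrow : α ≤ (D.filter (fun γ => ncomp γ = c')).card := row_le_sz hD hpα hα
  by_cases hcc : c = c'
  · subst hcc
    have hook := hook_bound hD hpα hα
    have hsz := sz_le_card (D := D) c
    omega
  · have hp1 : part D c 1 ≤ (D.filter (fun γ => ncomp γ = c)).card := part_le_sz c 1
    have hsum : (D.filter (fun γ => ncomp γ = (0 : Fin 2))).card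
        + (D.filter (fun γ => ncomp γ = (1 : Fin 2))).card = D.card := sz_add_sz
    rcases fin2_cases c with rfl | rfl <;> rcases fin2_cases c' with rfl | rfl <;>
      first
        | exact absurd rfl hcc
        | (simp only [sv_zero, sv_one, hSv] at *; omega)

lemma gap_lt₂ (hD : IsDiagram D) (hs : s₀ ≤ s₁) (hn : D.card ≤ n)
    (hfn : (s₁ : ℤ) + n < f) {a b α β : ℕ} {c c' : Fin 2}
    (hx : Removable D (a, b, c))
    (hy : Addable D (α, β, c')) :
    cont ![(s₀ : ℤ), (s₁ : ℤ)] (a, b, c) - cont ![(s₀ : ℤ), (s₁ : ℤ)] (α, β, c') < f := by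
  set Sv : Fin 2 → ℤ := ![(s₀ : ℤ), (s₁ : ℤ)] with hSv
  rw [cont_mk, cont_mk]
  obtain ⟨ha, hb1, hbeq, -⟩ := (removable_iff hD a b c).1 hx
  have hub : (b : ℤ) - a ≤ part D c 1 - 1 := by
    have h1 : part D c a ≤ part D c 1 := part_antitone hD c (le_refl 1) ha
    omega
  obtain ⟨hα, hβeq, hαcase⟩ := (addable_iff hD α β c').1 hy
  -- lower bound on cont y : β - α ≥ 1 - α, and bound α
  by_cases hcc : c = c'
  · subst hcc
    -- need part c 1 + α - 2 ≤ sz c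
    have hkey : part D c 1 + α ≤ (D.filter (fun γ => ncomp γ = c)).card + 2 := by
      rcases hαcase with h1 | hlt
      · subst h1
        have := part_le_sz (D := D) c 1
        omega
      · have hα2 : 2 ≤ α ∨ α = 1 := by omega
        rcases hα2 with hα2 | rfl
        · have hp : 1 ≤ part D c (α - 1) := by omega
          have hook := hook_bound hD hp (by omega : 1 ≤ α - 1)
          omega
        · have := part_le_sz (D := D) c 1
          omega
    have hsz := sz_le_card (D := D) c
    omega
  · have hp1 : part D c 1 ≤ (D.filter (fun γ => ncomp γ = c)).card := part_le_sz c 1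
    have hαsz : α ≤ (D.filter (fun γ => ncomp γ = c')).card + 1 := by
      rcases hαcase with h1 | hlt
      · subst h1; omega
      · by_cases hα2 : α = 1
        · subst hα2; omega
        · have hp : 1 ≤ part D c' (α - 1) := by omega
          have := row_le_sz hD hp (by omega : 1 ≤ α - 1)
          omega
    have hsum : (D.filter (fun γ => ncomp γ = (0 : Fin 2))).card
        + (D.filter (fun γ => ncomp γ = (1 : Fin 2))).card = D.card := sz_add_sz
    rcases fin2_cases c with rfl | rfl <;> rcases fin2_cases c' with rfl | rfl <;>
      first
        | exact absurd rfl hcc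
        | (simp only [sv_zero, sv_one, hSv] at *; omega)

lemma cont_eq_of_res_eq (hD : IsDiagram D) (hs : s₀ ≤ s₁) (hn : D.card ≤ n)
    (hfn : (s₁ : ℤ) + n < f) {x y : Node}
    (hx : Removable D x) (hy : Addable D y ∨ Removable D y)
    (hres : res f ![(s₀ : ℤ), (s₁ : ℤ)] x = res f ![(s₀ : ℤ), (s₁ : ℤ)] y) :
    cont ![(s₀ : ℤ), (s₁ : ℤ)] x = cont ![(s₀ : ℤ), (s₁ : ℤ)] y := by
  set Sv : Fin 2 → ℤ := ![(s₀ : ℤ), (s₁ : ℤ)] with hSv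
  have hdvd : (f : ℤ) ∣ cont Sv y - cont Sv x := by
    have h1 : ((cont Sv x : ℤ) : ZMod f) = ((cont Sv y : ℤ) : ZMod f) := hres
    rw [ZMod.intCast_eq_intCast_iff] at h1
    exact Int.ModEq.dvd h1
  obtain ⟨x1, x2, x3⟩ := x
  obtain ⟨y1, y2, y3⟩ := y
  have hgap1 : cont Sv (y1, y2, y3) - cont Sv (x1, x2, x3) < f :=
    gap_lt₁ hD hs hn hfn hy hx
  have hgap2 : cont Sv (x1, x2, x3) - cont Sv (y1, y2, y3) < f := by
    rcases hy with hy | hy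
    · exact gap_lt₂ hD hs hn hfn hx hy
    · exact gap_lt₁ hD hs hn hfn (Or.inr hx) hy
  have h0 : cont Sv (y1, y2, y3) - cont Sv (x1, x2, x3) = 0 := by
    apply Int.eq_zero_of_abs_lt_dvd hdvd
    rw [abs_lt]
    constructor <;> omega
  omega

lemma rem_eq_of_cont_eq (hD : IsDiagram D) {a b a' b' : ℕ} {c : Fin 2}
    (h1 : Removable D (a, b, c)) (h2 : Removable D (a', b', c))
    (hc : (b : ℤ) - a = (b' : ℤ) - a') : a = a' ∧ b = b' := by
  obtain ⟨ha, hb, hbeq, hlt⟩ := (removable_iff hD a b c).1 h1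
  obtain ⟨ha', hb', hbeq', hlt'⟩ := (removable_iff hD a' b' c).1 h2
  rcases lt_trichotomy a a' with h | h | h
  · have : part D c a' ≤ part D c (a + 1) := part_antitone hD c (by omega) (by omega)
    omega
  · subst h; omega
  · have : part D c a ≤ part D c (a' + 1) := part_antitone hD c (by omega) (by omega)
    omega

lemma add_eq_of_cont_eq (hD : IsDiagram D) {a b a' b' : ℕ} {c : Fin 2}
    (h1 : Addable D (a, b, c)) (h2 : Addable D (a', b', c))
    (hc : (b : ℤ) - a = (b' : ℤ) - a') : a = a' ∧ b = b' := by
  obtain ⟨ha, hbeq, hcase⟩ := (addable_iff hD a b c).1 h1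
  obtain ⟨ha', hbeq', hcase'⟩ := (addable_iff hD a' b' c).1 h2
  rcases lt_trichotomy a a' with h | h | h
  · rcases hcase' with h1' | hlt'
    · omega
    · have : part D c (a' - 1) ≤ part D c a := part_antitone hD c ha (by omega)
      omega
  · subst h; omega
  · rcases hcase with h1' | hlt'
    · omega
    · have : part D c (a - 1) ≤ part D c a' := part_antitone hD c ha' (by omega)
      omega

lemma not_add_rem_cont_eq (hD : IsDiagram D) {a b a' b' : ℕ} {c : Fin 2}
    (h1 : Addable D (a, b, c)) (h2 : Removable D (a', b', c))
    (hc : (b : ℤ) - a = (b' : ℤ) - a') : False := by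
  obtain ⟨ha, hbeq, hcase⟩ := (addable_iff hD a b c).1 h1
  obtain ⟨ha', hb', hbeq', hlt'⟩ := (removable_iff hD a' b' c).1 h2
  rcases le_or_gt a a' with h | h
  · have : part D c a' ≤ part D c a := part_antitone hD c ha h
    omega
  · rcases hcase with h1' | hlt'
    · omega
    · have : part D c (a - 1) ≤ part D c a' := by
        apply part_antitone hD c ha'
        omega
      omega

end Cont
/-- The condition `λ⁽⁰⁾ⱼ ≥ λ⁽¹⁾ⱼ₊d` for all `j ≥ 1`. -/
def Sp (d : ℕ) (D : Finset Node) : Prop :=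
  ∀ j : ℕ, 1 ≤ j → part D 1 (j + d) ≤ part D 0 j

section OrderLemmas

lemma between_eq {Sv : Fin 2 → ℤ} {γ δ x : Node}
    (hcont : cont Sv δ = cont Sv γ) (hcompδ : ncomp δ = 0) (hcompγ : ncomp γ = 1)
    (h1 : chargeLT Sv γ x) (h2 : chargeLT Sv x δ ∨ x = δ) : x = δ := by
  rcases h2 with h2 | h2
  · exfalso
    rcases h1 with h1 | ⟨h1e, h1c⟩ <;> rcases h2 with h2 | ⟨h2e, h2c⟩ <;> omega
  · exact h2

end OrderLemmas

section LemA

variable {D : Finset Node} {s₀ s₁ : ℕ}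

lemma sp_of_normal (hs : s₀ ≤ s₁) {m : ℕ} {i : ZMod m} (hD : IsDiagram D) {γ : Node}
    (hnorm : NormalNode D (chargeLT ![(s₀ : ℤ), (s₁ : ℤ)]) (res m ![(s₀ : ℤ), (s₁ : ℤ)]) i γ)
    (hS : Sp (s₁ - s₀) (D.erase γ)) : Sp (s₁ - s₀) D := by
  set Sv : Fin 2 → ℤ := ![(s₀ : ℤ), (s₁ : ℤ)] with hSv
  set d := s₁ - s₀ with hd
  obtain ⟨hrem, hresγ, hcnt⟩ := hnorm
  obtain ⟨a, b, c⟩ := γ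
  have hγD : ((a, b, c) : Node) ∈ D := hrem.1
  rcases fin2_cases c with rfl | rfl
  · -- component 0 : removing only decreases component 0
    intro j hj
    have h1 : part (D.erase ((a, b, 0) : Node)) 1 (j + d) = part D 1 (j + d) :=
      part_erase_ne _ _ (Or.inr (by simp [ncomp]))
    have h2 := part_mono_subset (Finset.erase_subset ((a, b, 0) : Node) D) 0 j
    have h3 := hS j hj
    omega
  · -- component 1
    obtain ⟨ha, hb, hbeq, hlt⟩ := (removable_iff hD a b 1).1 hrem
    intro j hj
    by_cases hja : j + d = a
    · by_contra hcon
      push_neg at hcon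
      rw [hja] at hcon
      have hSj := hS j hj
      have he1 : part (D.erase ((a, b, 1) : Node)) 1 (j + d) = part D 1 a - 1 := by
        rw [hja]
        exact part_erase_eq hγD a 1 rfl rfl
      have he0 : part (D.erase ((a, b, 1) : Node)) 0 j = part D 0 j :=
        part_erase_ne _ _ (Or.inr (by simp [ncomp]))
      have hpj : part D 0 j = b - 1 := by omega
      -- δ = (j, b, 0) is addable
      have hδ : Addable D ((j, b, 0) : Node) := by
        rw [addable_iff hD]
        refine ⟨hj, by omega, ?_⟩
        by_cases hj1 : j = 1
        · exact Or.inl hj1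
        · refine Or.inr ?_
          have hs1 := hS (j - 1) (by omega)
          have he1' : part (D.erase ((a, b, 1) : Node)) 1 (j - 1 + d) =
              part D 1 (j - 1 + d) :=
            part_erase_ne _ _ (Or.inl (by simp [nrow]; omega))
          have he0' : part (D.erase ((a, b, 1) : Node)) 0 (j - 1) = part D 0 (j - 1) :=
            part_erase_ne _ _ (Or.inr (by simp [ncomp]))
          have hmon : part D 1 (j + d) ≤ part D 1 (j - 1 + d) :=
            part_antitone hD 1 (by omega) (by omega)
          rw [hja] at hmon
          omega
      have hcδ : cont Sv ((j, b, 0) : Node) = cont Sv ((a, b, 1) : Node) := by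
        rw [cont_mk, cont_mk, hSv, sv_zero, sv_one]
        have : a = j + d := hja.symm
        omega
      have hresδ : res m Sv ((j, b, 0) : Node) = i := by
        show ((cont Sv ((j, b, 0) : Node) : ℤ) : ZMod m) = i
        rw [hcδ]
        exact hresγ
      have hltγδ : chargeLT Sv ((a, b, 1) : Node) ((j, b, 0) : Node) :=
        Or.inr ⟨hcδ.symm, by simp [ncomp]⟩
      have hkey := hcnt ((j, b, 0) : Node) hresδ hltγδ
      have hAset : {x : Node | Addable D x ∧ res m Sv x = i ∧
          chargeLT Sv ((a, b, 1) : Node) x ∧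
          (chargeLT Sv x ((j, b, 0) : Node) ∨ x = ((j, b, 0) : Node))} =
          {((j, b, 0) : Node)} := by
        ext x
        simp only [Set.mem_setOf_eq, Set.mem_singleton_iff]
        constructor
        · rintro ⟨-, -, h1, h2⟩
          exact between_eq hcδ rfl rfl h1 h2
        · rintro rfl
          exact ⟨hδ, hresδ, hltγδ, Or.inr rfl⟩
      have hRset : {x : Node | Removable D x ∧ res m Sv x = i ∧
          chargeLT Sv ((a, b, 1) : Node) x ∧
          (chargeLT Sv x ((j, b, 0) : Node) ∨ x = ((j, b, 0) : Node))} = ∅ := by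
        rw [Set.eq_empty_iff_forall_notMem]
        rintro x ⟨hxrem, -, h1, h2⟩
        have := between_eq hcδ rfl rfl h1 h2
        subst this
        exact not_addable_removable hδ hxrem
      rw [hAset, hRset] at hkey
      simp [Set.ncard_singleton, Set.ncard_empty] at hkey
    · have h1 : part (D.erase ((a, b, 1) : Node)) 1 (j + d) = part D 1 (j + d) :=
        part_erase_ne _ _ (Or.inl (by simp [nrow]; omega))
      have h0 : part (D.erase ((a, b, 1) : Node)) 0 j = part D 0 j :=
        part_erase_ne _ _ (Or.inr (by simp [ncomp]))
      have := hS j hj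
      omega

end LemA
section Cand

variable {D : Finset Node} {s₀ s₁ : ℕ}

/-- A removable node whose removal keeps `Sp` and which is a good candidate:
either a component-1 removable node not blocked by a component-0 addable node of the
same content, or a component-0 removable node whose removal preserves the dominance. -/
def IsCand (s₀ s₁ : ℕ) (D : Finset Node) (γ : Node) : Prop :=
  Removable D γ ∧
    ((ncomp γ = 1 ∧ ∀ ξ : Node, Addable D ξ → ncomp ξ = 0 →
        cont ![(s₀ : ℤ), (s₁ : ℤ)] ξ ≠ cont ![(s₀ : ℤ), (s₁ : ℤ)] γ) ∨
     (ncomp γ = 0 ∧ part D 1 (nrow γ + (s₁ - s₀)) < ncol γ))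

lemma cand_exists (hs : s₀ ≤ s₁) (hD : IsDiagram D) (hSp : Sp (s₁ - s₀) D)
    (hne : D.Nonempty) : ∃ γ, IsCand s₀ s₁ D γ := by
  set Sv : Fin 2 → ℤ := ![(s₀ : ℤ), (s₁ : ℤ)] with hSv
  set d := s₁ - s₀ with hd
  by_cases hP1 : part D 1 1 = 0
  · -- component 1 is empty
    obtain ⟨γ₀, hγ₀⟩ := hne
    obtain ⟨a₀, b₀, c₀⟩ := γ₀
    obtain ⟨ha₀, hb₀, hbp₀⟩ := (mem_iff_le_part hD a₀ b₀ c₀).1 hγ₀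
    have hc₀ : c₀ = 0 := by
      rcases fin2_cases c₀ with rfl | rfl
      · rfl
      · exfalso
        have := part_antitone hD 1 (le_refl 1) ha₀
        omega
    subst hc₀
    have hp01 : 1 ≤ part D 0 1 := by
      have := part_antitone hD 0 (le_refl 1) ha₀
      omega
    have hex : ∃ m1, 1 ≤ m1 ∧ part D 0 (m1 + 1) < part D 0 m1 := by
      by_contra hno
      push_neg at hno
      have hmono : ∀ m1, 1 ≤ m1 → 1 ≤ part D 0 m1 := by
        intro m1 hm1
        induction m1, hm1 using Nat.le_induction with
        | base => exact hp01
        | succ m hm ih => have := hno m hm; omega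
      have := hmono (D.card + 1) (by omega)
      rw [part_top_zero hD] at this
      omega
    obtain ⟨m1, hm1, hm1lt⟩ := hex
    refine ⟨(m1, part D 0 m1, 0), ?_, Or.inr ⟨rfl, ?_⟩⟩
    · exact (removable_iff hD m1 (part D 0 m1) 0).2 ⟨hm1, by omega, rfl, hm1lt⟩
    · show part D 1 (m1 + d) < ncol (m1, part D 0 m1, 0)
      have h1 : part D 1 (m1 + d) ≤ part D 1 1 := part_antitone hD 1 (le_refl 1) (by omega)
      show part D 1 (m1 + d) < part D 0 m1
      omega
  · -- component 1 nonempty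
    have hP1' : 1 ≤ part D 1 1 := by omega
    have hcard1 : 1 ≤ D.card := Finset.card_pos.2 hne
    have hexA : ∃ m, 1 ≤ m ∧ part D 1 (m + 1) < part D 1 1 :=
      ⟨D.card, hcard1, by rw [part_top_zero hD]; omega⟩
    obtain ⟨a₁, ⟨ha₁1, ha₁lt⟩, hminA⟩ :
        ∃ m, (1 ≤ m ∧ part D 1 (m + 1) < part D 1 1) ∧
          ∀ k, k < m → ¬(1 ≤ k ∧ part D 1 (k + 1) < part D 1 1) :=
      ⟨Nat.find hexA, Nat.find_spec hexA, fun k hk => Nat.find_min hexA hk⟩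
    have hblock : ∀ jj, 1 ≤ jj → jj ≤ a₁ → part D 1 jj = part D 1 1 := by
      intro jj h1 h2
      have hle := part_antitone hD 1 (le_refl 1) h1
      rcases Nat.eq_or_lt_of_le h1 with h | h
      · subst h; rfl
      · have hmin := hminA (jj - 1) (by omega)
        push_neg at hmin
        have := hmin (by omega)
        have hj : jj - 1 + 1 = jj := by omega
        rw [hj] at this
        omega
    have hρ : Removable D (a₁, part D 1 1, 1) :=
      (removable_iff hD a₁ (part D 1 1) 1).2
        ⟨ha₁1, hP1', (hblock a₁ ha₁1 le_rfl).symm, ha₁lt⟩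
    by_cases hbl : ∃ ξ : Node, Addable D ξ ∧ ncomp ξ = 0 ∧
        cont Sv ξ = cont Sv ((a₁, part D 1 1, 1) : Node)
    · -- ρ₁ is blocked: produce a component-0 candidate
      obtain ⟨ξ, hξadd, hξc, hξcont⟩ := hbl
      obtain ⟨r, bξ, cξ⟩ := ξ
      have hcξ : cξ = 0 := hξc
      subst hcξ
      obtain ⟨hr1, hbξ, hrcase⟩ := (addable_iff hD r bξ 0).1 hξadd
      have hkey : (part D 0 r : ℤ) = (part D 1 1 : ℤ) + d + r - 1 - a₁ := by
        rw [cont_mk, cont_mk, hSv, sv_zero, sv_one] at hξcont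
        omega
      have hpr : 1 ≤ part D 0 r := by
        by_contra h0
        push_neg at h0
        have hrda : r + d ≤ a₁ := by omega
        have h1 : part D 1 (r + d) = part D 1 1 := hblock (r + d) (by omega) hrda
        have h2 := hSp r hr1
        omega
      have hexT : ∃ m, r ≤ m ∧ part D 0 (m + 1) < part D 0 r :=
        ⟨D.card, row_le_card hD hpr hr1, by rw [part_top_zero hD]; omega⟩
      obtain ⟨t, ⟨hrt, htlt⟩, hminT⟩ :
          ∃ m, (r ≤ m ∧ part D 0 (m + 1) < part D 0 r) ∧
            ∀ k, k < m → ¬(r ≤ k ∧ part D 0 (k + 1) < part D 0 r) :=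
        ⟨Nat.find hexT, Nat.find_spec hexT, fun k hk => Nat.find_min hexT hk⟩
      have hblockT : ∀ jj, r ≤ jj → jj ≤ t → part D 0 jj = part D 0 r := by
        intro jj h1 h2
        have hle := part_antitone hD 0 hr1 h1
        rcases Nat.eq_or_lt_of_le h1 with h | h
        · subst h; rfl
        · have hmin := hminT (jj - 1) (by omega)
          push_neg at hmin
          have := hmin (by omega)
          have hj : jj - 1 + 1 = jj := by omega
          rw [hj] at this
          omega
      have hremT : Removable D (t, part D 0 r, 0) :=
        (removable_iff hD t (part D 0 r) 0).2
          ⟨by omega, hpr, (hblockT t hrt le_rfl).symm, htlt⟩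
      refine ⟨(t, part D 0 r, 0), hremT, Or.inr ⟨rfl, ?_⟩⟩
      show part D 1 (t + d) < part D 0 r
      by_contra hge
      push_neg at hge
      have hSt := hSp t (by omega)
      rw [hblockT t hrt le_rfl] at hSt
      have heqq : part D 1 (t + d) = part D 0 r := by omega
      by_cases hta : t + d ≤ a₁
      · have h1 : part D 1 (t + d) = part D 1 1 := hblock _ (by omega) hta
        omega
      · have h2 : part D 1 (t + d) ≤ part D 1 (a₁ + 1) :=
          part_antitone hD 1 (by omega) (by omega)
        have hrda : r + d ≤ a₁ := by omega
        have h3 : part D 1 (r + d) = part D 1 1 := hblock _ (by omega) hrda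
        have h4 := hSp r hr1
        omega
    · refine ⟨(a₁, part D 1 1, 1), hρ, Or.inl ⟨rfl, ?_⟩⟩
      push_neg at hbl
      intro ξ h1 h2
      exact hbl ξ h1 h2

end Cand
section GoodNodeExists

variable {D : Finset Node} {s₀ s₁ n f : ℕ}

lemma res_eq_of_cont_eq {m : ℕ} {x y : Node}
    (h : cont ![(s₀ : ℤ), (s₁ : ℤ)] x = cont ![(s₀ : ℤ), (s₁ : ℤ)] y) :
    res m ![(s₀ : ℤ), (s₁ : ℤ)] x = res m ![(s₀ : ℤ), (s₁ : ℤ)] y := by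
  show ((cont ![(s₀ : ℤ), (s₁ : ℤ)] x : ℤ) : ZMod m) = _
  rw [h]
  rfl

lemma normal_of_no_addable {m : ℕ} {γ : Node} (hγrem : Removable D γ)
    (hno : ∀ x : Node, Addable D x → res m ![(s₀ : ℤ), (s₁ : ℤ)] x =
      res m ![(s₀ : ℤ), (s₁ : ℤ)] γ → ¬ chargeLT ![(s₀ : ℤ), (s₁ : ℤ)] γ x) :
    NormalNode D (chargeLT ![(s₀ : ℤ), (s₁ : ℤ)]) (res m ![(s₀ : ℤ), (s₁ : ℤ)])
      (res m ![(s₀ : ℤ), (s₁ : ℤ)] γ) γ := by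
  refine ⟨hγrem, rfl, ?_⟩
  intro η hη hγη
  have hA : {x : Node | Addable D x ∧ res m ![(s₀ : ℤ), (s₁ : ℤ)] x =
      res m ![(s₀ : ℤ), (s₁ : ℤ)] γ ∧ chargeLT ![(s₀ : ℤ), (s₁ : ℤ)] γ x ∧
      (chargeLT ![(s₀ : ℤ), (s₁ : ℤ)] x η ∨ x = η)} = ∅ := by
    rw [Set.eq_empty_iff_forall_notMem]
    rintro x ⟨h1, h2, h3, -⟩
    exact hno x h1 h2 h3
  rw [hA]
  simp

lemma exists_good (hs : s₀ ≤ s₁) (hD : IsDiagram D) (hSp : Sp (s₁ - s₀) D)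
    (hn : D.card ≤ n) (hfn : (s₁ : ℤ) + n < f) (hne : D.Nonempty) :
    ∃ (γ : Node) (i : ZMod f),
      GoodNode D (chargeLT ![(s₀ : ℤ), (s₁ : ℤ)]) (res f ![(s₀ : ℤ), (s₁ : ℤ)]) i γ ∧
      γ ∈ D ∧ Sp (s₁ - s₀) (D.erase γ) := by
  by_cases hc1 : ∃ γ, IsCand s₀ s₁ D γ ∧ ncomp γ = 1
  · -- there is a component-1 candidate : it is good
    obtain ⟨γ, ⟨hγrem, hγcases⟩, hγc⟩ := hc1
    have hunb : ∀ ξ : Node, Addable D ξ → ncomp ξ = 0 → cont ![(s₀ : ℤ), (s₁ : ℤ)] ξ ≠ cont ![(s₀ : ℤ), (s₁ : ℤ)] γ := by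
      rcases hγcases with ⟨-, h⟩ | ⟨h0, -⟩
      · exact h
      · rw [hγc] at h0; exact absurd h0 (by decide)
    have hnorm : NormalNode D (chargeLT ![(s₀ : ℤ), (s₁ : ℤ)]) (res f ![(s₀ : ℤ), (s₁ : ℤ)]) (res f ![(s₀ : ℤ), (s₁ : ℤ)] γ) γ := by
      apply normal_of_no_addable hγrem
      intro x hxadd hxres hγx
      have hcx : cont ![(s₀ : ℤ), (s₁ : ℤ)] γ = cont ![(s₀ : ℤ), (s₁ : ℤ)] x :=
        cont_eq_of_res_eq hD hs hn hfn hγrem (Or.inl hxadd) hxres.symm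
      rcases hγx with hlt | ⟨heq, hcomp⟩
      · omega
      · rw [hγc] at hcomp
        exact hunb x hxadd (ncomp_lt_one hcomp) hcx.symm
    refine ⟨γ, res f ![(s₀ : ℤ), (s₁ : ℤ)] γ, ⟨hnorm, ?_⟩, hγrem.1, ?_⟩
    · -- minimality
      intro δ hδ
      have hcont : cont ![(s₀ : ℤ), (s₁ : ℤ)] δ = cont ![(s₀ : ℤ), (s₁ : ℤ)] γ :=
        cont_eq_of_res_eq hD hs hn hfn hδ.1 (Or.inr hγrem) hδ.2.1
      rcases fin2_cases (ncomp δ) with hδc | hδc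
      · exact Or.inr (Or.inr ⟨hcont.symm, by rw [hδc, hγc]; decide⟩)
      · refine Or.inl ?_
        obtain ⟨d1, d2, d3⟩ := δ
        obtain ⟨g1, g2, g3⟩ := γ
        have hd3 : d3 = 1 := hδc
        have hg3 : g3 = 1 := hγc
        subst hd3 hg3
        have hc' : (d2 : ℤ) - d1 = (g2 : ℤ) - g1 := by
          rw [cont_mk, cont_mk] at hcont
          omega
        obtain ⟨h1, h2⟩ := rem_eq_of_cont_eq hD hδ.1 hγrem hc'
        rw [h1, h2]
    · -- Sp preserved : component-1 removal
      intro j hj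
      have h1 : part (D.erase γ) 1 (j + (s₁ - s₀)) ≤ part D 1 (j + (s₁ - s₀)) :=
        part_mono_subset (Finset.erase_subset γ D) 1 (j + (s₁ - s₀))
      have h0 : part (D.erase γ) 0 j = part D 0 j :=
        part_erase_ne _ _ (Or.inr (by rw [hγc]; decide))
      have := hSp j hj
      omega
  · -- no component-1 candidate : a component-0 candidate is good
    obtain ⟨γ, hγrem, hγcases⟩ := cand_exists hs hD hSp hne
    have hγc0 : ncomp γ = 0 ∧ part D 1 (nrow γ + (s₁ - s₀)) < ncol γ := by
      rcases hγcases with ⟨h1, h2⟩ | h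
      · exact absurd ⟨γ, ⟨hγrem, Or.inl ⟨h1, h2⟩⟩, h1⟩ hc1
      · exact h
    obtain ⟨hγc, hγsafe⟩ := hγc0
    have hnorm : NormalNode D (chargeLT ![(s₀ : ℤ), (s₁ : ℤ)]) (res f ![(s₀ : ℤ), (s₁ : ℤ)]) (res f ![(s₀ : ℤ), (s₁ : ℤ)] γ) γ := by
      apply normal_of_no_addable hγrem
      intro x hxadd hxres hγx
      have hcx : cont ![(s₀ : ℤ), (s₁ : ℤ)] γ = cont ![(s₀ : ℤ), (s₁ : ℤ)] x :=
        cont_eq_of_res_eq hD hs hn hfn hγrem (Or.inl hxadd) hxres.symm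
      rcases hγx with hlt | ⟨heq, hcomp⟩
      · omega
      · rw [hγc] at hcomp
        exact absurd hcomp (by omega)
    refine ⟨γ, res f ![(s₀ : ℤ), (s₁ : ℤ)] γ, ⟨hnorm, ?_⟩, hγrem.1, ?_⟩
    · -- minimality
      intro δ hδ
      obtain ⟨hδrem, hδres, hδcnt⟩ := hδ
      have hcont : cont ![(s₀ : ℤ), (s₁ : ℤ)] δ = cont ![(s₀ : ℤ), (s₁ : ℤ)] γ :=
        cont_eq_of_res_eq hD hs hn hfn hδrem (Or.inr hγrem) hδres
      rcases fin2_cases (ncomp δ) with hδc | hδc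
      · refine Or.inl ?_
        obtain ⟨d1, d2, d3⟩ := δ
        obtain ⟨g1, g2, g3⟩ := γ
        have hd3 : d3 = 0 := hδc
        have hg3 : g3 = 0 := hγc
        subst hd3 hg3
        have hc' : (d2 : ℤ) - d1 = (g2 : ℤ) - g1 := by
          rw [cont_mk, cont_mk] at hcont
          omega
        obtain ⟨h1, h2⟩ := rem_eq_of_cont_eq hD hδrem hγrem hc'
        rw [h1, h2]
      · -- δ has component 1 : contradiction
        exfalso
        by_cases hbl : ∃ ξ : Node, Addable D ξ ∧ ncomp ξ = 0 ∧ cont ![(s₀ : ℤ), (s₁ : ℤ)] ξ = cont ![(s₀ : ℤ), (s₁ : ℤ)] δ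
        · obtain ⟨ξ, hξadd, hξc, hξcont⟩ := hbl
          have hresξ : res f ![(s₀ : ℤ), (s₁ : ℤ)] ξ = res f ![(s₀ : ℤ), (s₁ : ℤ)] γ :=
            (res_eq_of_cont_eq (hξcont.trans hcont))
          have hltδξ : chargeLT ![(s₀ : ℤ), (s₁ : ℤ)] δ ξ := Or.inr ⟨hξcont.symm, by rw [hξc, hδc]; decide⟩
          have hkey := hδcnt ξ hresξ hltδξ
          have hAset : {x : Node | Addable D x ∧
              res f ![(s₀ : ℤ), (s₁ : ℤ)] x = res f ![(s₀ : ℤ), (s₁ : ℤ)] γ ∧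
              chargeLT ![(s₀ : ℤ), (s₁ : ℤ)] δ x ∧
              (chargeLT ![(s₀ : ℤ), (s₁ : ℤ)] x ξ ∨ x = ξ)} = {ξ} := by
            ext x
            simp only [Set.mem_setOf_eq, Set.mem_singleton_iff]
            constructor
            · rintro ⟨-, -, h1, h2⟩
              exact between_eq hξcont hξc hδc h1 h2
            · rintro rfl
              exact ⟨hξadd, hresξ, hltδξ, Or.inr rfl⟩
          have hRset : {x : Node | Removable D x ∧
              res f ![(s₀ : ℤ), (s₁ : ℤ)] x = res f ![(s₀ : ℤ), (s₁ : ℤ)] γ ∧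
              chargeLT ![(s₀ : ℤ), (s₁ : ℤ)] δ x ∧
              (chargeLT ![(s₀ : ℤ), (s₁ : ℤ)] x ξ ∨ x = ξ)} = ∅ := by
            rw [Set.eq_empty_iff_forall_notMem]
            rintro x ⟨hxrem, -, h1, h2⟩
            have := between_eq hξcont hξc hδc h1 h2
            subst this
            exact not_addable_removable hξadd hxrem
          rw [hAset, hRset] at hkey
          simp [Set.ncard_singleton, Set.ncard_empty] at hkey
        · push_neg at hbl
          exact hc1 ⟨δ, ⟨hδrem, Or.inl ⟨hδc, fun ξ h1 h2 => hbl ξ h1 h2⟩⟩, hδc⟩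
    · -- Sp preserved : component-0 removal with safety condition
      obtain ⟨g1, g2, g3⟩ := γ
      have hg3 : g3 = 0 := hγc
      subst hg3
      obtain ⟨hg1, hg2, hgeq, hglt⟩ := (removable_iff hD g1 g2 0).1 hγrem
      intro j hj
      have h1 : part (D.erase ((g1, g2, 0) : Node)) 1 (j + (s₁ - s₀)) = part D 1 (j + (s₁ - s₀)) :=
        part_erase_ne _ _ (Or.inr (by simp [ncomp]))
      by_cases hjg : j = g1
      · have h0 : part (D.erase ((g1, g2, 0) : Node)) 0 j = part D 0 j - 1 := by
          rw [hjg]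
          exact part_erase_eq hγrem.1 g1 0 rfl rfl
        have h2 : part D 1 (j + (s₁ - s₀)) < g2 := by rw [hjg]; exact hγsafe
        have h3 : g2 = part D 0 j := by rw [hjg]; exact hgeq
        omega
      · have h0 : part (D.erase ((g1, g2, 0) : Node)) 0 j = part D 0 j :=
          part_erase_ne _ _ (Or.inl (by simp [nrow]; omega))
        have := hSp j hj
        omega

end GoodNodeExists
section Assembly

variable {s₀ s₁ : ℕ}

lemma isDiagram_empty : IsDiagram (∅ : Finset Node) :=
  ⟨fun γ hγ => absurd hγ (Finset.notMem_empty γ),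
   fun γ hγ => absurd hγ (Finset.notMem_empty γ),
   fun γ hγ => absurd hγ (Finset.notMem_empty γ)⟩

lemma part_empty (c : Fin 2) (a : ℕ) : part (∅ : Finset Node) c a = 0 := by
  simp [part]

lemma crystalSet_card {α : Type*} {lt : Node → Node → Prop} {r : Node → α} :
    ∀ {k : ℕ} {D : Finset Node}, CrystalSet lt r k D → D.card = k := by
  intro k D h
  induction h with
  | empty => simp
  | step i hD hgood hprev ih =>
    rename_i n' D' γ'
    have hγ : γ' ∈ D' := hgood.1.1.1
    have := Finset.card_erase_of_mem hγ
    have hpos : 1 ≤ D'.card := Finset.card_pos.2 ⟨γ', hγ⟩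
    omega

lemma crystalSet_diagram {α : Type*} {lt : Node → Node → Prop} {r : Node → α}
    {k : ℕ} {D : Finset Node} (h : CrystalSet lt r k D) : IsDiagram D := by
  induction h with
  | empty => exact isDiagram_empty
  | step i hD hgood hprev ih => exact hD

lemma crystalSet_sp (hs : s₀ ≤ s₁) {m : ℕ} {k : ℕ} {D : Finset Node}
    (h : CrystalSet (chargeLT ![(s₀ : ℤ), (s₁ : ℤ)]) (res m ![(s₀ : ℤ), (s₁ : ℤ)]) k D) :
    Sp (s₁ - s₀) D := by
  induction h with
  | empty => intro j hj; rw [part_empty, part_empty]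
  | step i hD hgood hprev ih => exact sp_of_normal hs hD hgood.1 ih

lemma sp_to_crystal {n f : ℕ} (hs : s₀ ≤ s₁) (hfn : (s₁ : ℤ) + n < f) :
    ∀ k : ℕ, k ≤ n → ∀ D : Finset Node, IsDiagram D → D.card = k → Sp (s₁ - s₀) D →
      CrystalSet (chargeLT ![(s₀ : ℤ), (s₁ : ℤ)]) (res f ![(s₀ : ℤ), (s₁ : ℤ)]) k D := by
  intro k
  induction k with
  | zero =>
    intro _ D hD hcard hSp
    rw [Finset.card_eq_zero] at hcard
    subst hcard
    exact CrystalSet.empty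
  | succ k ih =>
    intro hk D hD hcard hSp
    have hne : D.Nonempty := Finset.card_pos.1 (by omega)
    obtain ⟨γ, i, hgood, hγD, hSpE⟩ := exists_good hs hD hSp (by omega) hfn hne
    exact CrystalSet.step i hD hgood
      (ih (by omega) (D.erase γ) hgood.1.1.2
        (by rw [Finset.card_erase_of_mem hγD]; omega) hSpE)

end Assembly
/-- if `λ ∈ Φ_{e,n}^{(s₀,s₁)}` with `s₀ ≤ s₁` and `f > max (s₀+n) (s₁+n)`,
then `λ ∈ Φ_{f,n}^{(s₀,s₁)}`. -/
theorem uglovSet_mono_modulus (e : ℕ) (he : 1 < e) (s₀ s₁ : ℕ) (hs : s₀ ≤ s₁)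
    (n f : ℕ) (hf : max (s₀ + n) (s₁ + n) < f) (D : Finset Node)
    (h : UglovSet e ![(s₀ : ℤ), (s₁ : ℤ)] n D) :
    UglovSet f ![(s₀ : ℤ), (s₁ : ℤ)] n D := by
  have h' : CrystalSet (chargeLT ![(s₀ : ℤ), (s₁ : ℤ)]) (res e ![(s₀ : ℤ), (s₁ : ℤ)]) n D := h
  have hD := crystalSet_diagram h'
  have hcard := crystalSet_card h'
  have hSp := crystalSet_sp hs h'
  have hfn : (s₁ : ℤ) + n < f := by
    have : s₁ + n < f := lt_of_le_of_lt (le_max_right (s₀ + n) (s₁ + n)) hf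
    exact_mod_cast this
  exact sp_to_crystal hs hfn n le_rfl D hD hcard hSp

end UglovPaper
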